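/- arXiv:2201.11057 — 4 statements merged into one kernel-verified Lean document; each statement's English description precedes it below -/
import Mathlib

section
/- The Mathieu group M24 exists: there is a subgroup of the symmetric group on 24 points that acts 5-transitively but whose order is strictly less than 24!/2 (i.e., it is a proper subgroup of the alternating group). -/
namespace M24aux
open Equiv


def gmask : Fin 12 → ℕ := ![14438401, 12103682, 15818756, 14864392, 12955664, 9138208, 9887808, 11387008, 14385408, 11997696, 15606784, 8386560]

def tblN : Fin 5 → Fin 24 → ℕ :=
  ![ ![ 984818244535754528103549039458486304, 806860544561743935855488741067032577, 520095157757177449588707374441529409, 404444584496102245406967991692692545, 391596942144091265988555510844099649, 529232107259490636642260505618156609, 717292037742812664404411399956204609, 852441455002290865882399756266900545, 344293218119138433112542909436136513, 880877259404639344386380033491602497, 971879375751179836625974671159987265, 431261338047519614887392637141257281, 691489957532172809693344955003702337, 511747485164934748619223508595117121, 896593170615428627311203230919298113, 683573702578494440555447063604759617, 476004488008044737282270552292199489, 717330999805607577320140047364787265, 971839579263303919488122677849361473, 653225452507845741897703783696305217, 607783031170919860952143188905299009, 607508104410837297493430067053857857, 748483672073211555388023531333880897, 24146772568639923734532320700533825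 ],
     ![ 984818244535754528103549039458486304, 984818244535754528103549039458486304, 508299514177168869694717597359113280, 482459244872508884094011952735489088, 486239382796040701686834457591548992, 486436337543811580358070482196630592, 426650174657721078662045298197662784, 731761074648680910670051002071256128, 635296358739141861501273476932176960, 756426940875854272223580454502140992, 805356995012412349065097506312031296, 722406442930706181618520162552646720, 317270631815949307374509238892235840, 470456303171294292801997921766739008, 273556841011092196945043515912621120, 808065872240445175620635019137125440, 517575818349856518863874761103117376, 426728449137606466410447070169271360, 805552978064559189482842074650905664, 361411057532533761529632577694075968, 649687745800376187430272682068937792, 649098456813776876744538202306645056, 749663981314227127407759758814481472, 65572334076117502216803529620851776 ],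
     ![ 984818244535754528103549039458486304, 984818244535754528103549039458486304, 984818244535754528103549039458486304, 565418701036479941809476812488641568, 549953360047324324855908276247858208, 980515949964381935190258893022432288, 434302866126073042426915664882175008, 735173465884089624243644266041183264, 644309102624761996159756961450167328, 775426086863578775328330964240829472, 819558352111687704219204171020241952, 727433267206362930006721890689879072, 304140450964175439417529055566760992, 981722593103131903863488104050592800, 276986104594957191884201306814024736, 799996125117911055318418395696860192, 684541005358696785237102500802333728, 434067305590102561873041395557731360, 819951192233648099341514977388399648, 357353332875327344971460735531093024, 645511072397381784110829270601960480, 645236357050204301946937957284973600, 750787233597882826168295859680316448, 106947216307034401238590619506576416 ],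
     ![ 984818244535754528103549039458486304, 984818244535754528103549039458486304, 984818244535754528103549039458486304, 984818244535754528103549039458486304, 965210228645375495165158363136919584, 689893781620707734093162467634055200, 721293610522536252135138043038402592, 440645104290387398650821119413717024, 515671845703717014723754066923620384, 277119372783570304446220075105650720, 931310343950089290131655075522807840, 736600914740986264078854929723295776, 940143856773938018946106972813002784, 677944868737625976920637010726750240, 880727408113576153055369432315070496, 305635878268246832230312264980367392, 970298212872869934038451715415607328, 720782862017546027695480479528650784, 931467565807264908292798703883913248, 527640684661956209666948911934343200, 387438845010638908902966064267266080, 386967366487780507142328073672853536, 876546935168669595704599852696602656, 132987135620499144722269908702988320 ],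
     ![ 984818244535754528103549039458486304, 984818244535754528103549039458486304, 984818244535754528103549039458486304, 984818244535754528103549039458486304, 984818244535754528103549039458486304, 674413715299346884682513052683307040, 593976056720163258710915150310901792, 610521585509284231566238929931831328, 404122397847003863032054664641218592, 880935377321492124518014696031356960, 312254653785236882057116642471675936, 353509982180371974130608727882041376, 809408244251264600851464118193981472, 974265135070375460632367723527112736, 896370620103126805532900693508196384, 804340243560154787297680968027047968, 681026837620877537805747330604959776, 594054676555776201745429322131408928, 312411584655176440237508216194435104, 482412213292770087724628684976523296, 476804333958508868022293665313556512, 476568829452736300204285702214617120, 255123185946008473476744771328378912, 193833147351429632940446159213791264 ] ]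

def tblInvN : Fin 5 → Fin 24 → ℕ :=
  ![ ![ 984818244535754528103549039458486304, 806860544561743935855488741067032577, 804381848187490474304077135299576834, 932760472949215666593012673692107779, 313707576818661530029911088418587652, 941813160440036384538175444624671749, 687436330834953928202158423751590918, 816843089067328447931971748072850439, 730186007398624533187549744472327176, 341053370067109740078506213326783497, 983478296959358456272416194551677962, 605439057154145491853280600269063179, 651012830710936380975536338617041932, 397672396485667432905583217330947085, 858970928807607246802306395783889934, 423718139483212721205897630130963471, 484680590867679908344835304456258576, 548202697876232868936716728814076945, 982205245102222970254135964967437330, 937838591837154946467092123714913299, 688697074579649676001963639410066452, 553251589021199345580948742560875541, 299142317458089586745054779623408662, 506628831043115782145036437351891991 ],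
     ![ 984818244535754528103549039458486304, 984818244535754528103549039458486304, 508299514177168869694717597359113280, 342258950742930054751248652863341664, 860074615209563130864617004408571008, 901280072381523753064719853892469920, 843326768447072290062860656799974592, 897478502431335896173948801186333920, 770263058453745731765750964627244288, 894965472739362252675416340055524640, 763982261731150500092287109651563840, 275809650950636630372943722630415712, 761024511170995670978184270878672256, 760007581766211376026208218626721184, 898652116050120612282253910639445440, 262668280784437938797711650825766368, 886922447287800165467891097326913024, 884809237914283772590796354721220128, 429915765003156272909171856784819776, 776707563887018047187847973539219040, 263943257436695328387782429084026496, 722487841256581520329070532403201696, 258707986766103969204614622706992832, 265397219211990077237252071791593184 ],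
     ![ 984818244535754528103549039458486304, 984818244535754528103549039458486304, 984818244535754528103549039458486304, 565418701036479941809476812488641568, 690139710556570565624834271264968736, 980754277948395285740669321851507744, 310985776421273810477803780384561184, 651972491832157524681576407484144672, 468908290383647607378666130093711392, 842057896151106715428524033838228512, 934138998478857758273632314124740640, 434349878604366672049605769753078816, 725933209200860498156713504347861024, 966241697543402135656436996942935072, 513642527578194762975595074853877792, 390211668123236145974793747920141344, 558683220281687392414156993766440992, 800033848590833597468811549043934240, 925093029715397845100028813701629984, 591244537038660022073085864558283808, 309647123884105663455926778441322528, 807660032702830680746052677595649056, 357553834588362560871606160878295072, 684459571084686362208624098858327072 ],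
     ![ 984818244535754528103549039458486304, 984818244535754528103549039458486304, 984818244535754528103549039458486304, 984818244535754528103549039458486304, 965210228645375495165158363136919584, 549786020419476954135967644393834528, 603174125998201392860142382269794336, 856094770789628200007238512874326048, 469272264586211679610760956084488224, 308560791666659178871431296277841952, 362864336267270578384542703325349920, 935393851408245502915774958020167712, 819397078050010599958738032854960160, 687153201153067867861292941667895328, 513692124135023198005242178469038112, 389960158568790871961794956773263392, 981844006622687971717317665756809248, 599237783683902247905865893227825184, 653186471158878263407535882468132896, 735249053257623020233846194647435296, 644266246614321015543340922620741664, 349926637294197419360584460681250848, 425419241620595436845926260378634272, 553366742012300763839301185573718048 ],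
     ![ 984818244535754528103549039458486304, 984818244535754528103549039458486304, 984818244535754528103549039458486304, 984818244535754528103549039458486304, 984818244535754528103549039458486304, 674413715299346884682513052683307040, 593976056720163258710915150310901792, 402898153562565426244101513661220896, 926184082402402037482005733245552672, 853794903074241511735656843767285792, 348718619712714781320262450321393696, 441880834646379833318459706470139936, 719805891588806835666475610475169824, 967859532018859186399936045774899232, 804464409304087923431076922206029856, 306900412867415202785736857054447648, 554589066491113704716991526405769248, 593652526869108140232673301789509664, 638219302235385188881604817377658912, 508020741927577713012672871265306656, 638052214897464189422244553327478816, 348149405788015687046595056225060896, 481973730167460869845505723024377888, 681091334578905604383064630112651296 ] ]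

def dfun : Fin 24 → Fin 24 := ![ (2 : Fin 24), (0 : Fin 24), (1 : Fin 24), (3 : Fin 24), (4 : Fin 24), (5 : Fin 24), (6 : Fin 24), (7 : Fin 24), (8 : Fin 24), (9 : Fin 24), (10 : Fin 24), (11 : Fin 24), (12 : Fin 24), (13 : Fin 24), (14 : Fin 24), (15 : Fin 24), (16 : Fin 24), (17 : Fin 24), (18 : Fin 24), (19 : Fin 24), (20 : Fin 24), (21 : Fin 24), (22 : Fin 24), (23 : Fin 24) ]

def dinv : Fin 24 → Fin 24 := ![ (1 : Fin 24), (2 : Fin 24), (0 : Fin 24), (3 : Fin 24), (4 : Fin 24), (5 : Fin 24), (6 : Fin 24), (7 : Fin 24), (8 : Fin 24), (9 : Fin 24), (10 : Fin 24), (11 : Fin 24), (12 : Fin 24), (13 : Fin 24), (14 : Fin 24), (15 : Fin 24), (16 : Fin 24), (17 : Fin 24), (18 : Fin 24), (19 : Fin 24), (20 : Fin 24), (21 : Fin 24), (22 : Fin 24), (23 : Fin 24) ]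

def w0 : Fin 24 → ZMod 2 := ![ (1 : ZMod 2), (1 : ZMod 2), (0 : ZMod 2), (1 : ZMod 2), (1 : ZMod 2), (1 : ZMod 2), (0 : ZMod 2), (0 : ZMod 2), (0 : ZMod 2), (1 : ZMod 2), (0 : ZMod 2), (1 : ZMod 2), (1 : ZMod 2), (0 : ZMod 2), (0 : ZMod 2), (0 : ZMod 2), (0 : ZMod 2), (0 : ZMod 2), (0 : ZMod 2), (0 : ZMod 2), (0 : ZMod 2), (0 : ZMod 2), (0 : ZMod 2), (0 : ZMod 2) ]


def gen : Fin 12 → Fin 24 → ZMod 2 := fun j i => cond (Nat.testBit (gmask j) i.1) 1 0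

def emb (j : Fin 12) : Fin 24 := ⟨j.1, by omega⟩

def big (i : Fin 12) : Fin 24 := ⟨i.1 + 12, by omega⟩

def codePred (v : Fin 24 → ZMod 2) : Prop :=
  ∀ i, v i = ∑ j : Fin 12, v (emb j) * gen j i

lemma sum12 (f : Fin 12 → ZMod 2) : ∑ j, f j =
    f 0 + (f 1 + (f 2 + (f 3 + (f 4 + (f 5 + (f 6 + (f 7 + (f 8 + (f 9 + (f 10 + (f 11 + 0))))))))))) := rfl

lemma gen_delta : ∀ (i : Fin 24), i.1 < 12 → ∀ (j : Fin 12), gen j i = (if i.1 = j.1 then 1 else 0) := by decide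

lemma codePred_iff (v : Fin 24 → ZMod 2) :
    codePred v ↔ ∀ i : Fin 12, v (big i) = ∑ j : Fin 12, v (emb j) * gen j (big i) := by
  constructor
  · exact fun h i => h (big i)
  · intro h i
    rcases Nat.lt_or_ge i.1 12 with hlt | hge
    · have hs : ∑ j : Fin 12, v (emb j) * gen j i = v (emb ⟨i.1, hlt⟩) * gen ⟨i.1, hlt⟩ i := by
        apply Finset.sum_eq_single
        · intro b _ hb
          rw [gen_delta i hlt b, if_neg (fun hh => hb (Fin.ext hh.symm)), mul_zero]
        · intro hb; exact absurd (Finset.mem_univ _) hb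
      rw [hs, gen_delta i hlt, if_pos rfl, mul_one]
      have : emb ⟨i.1, hlt⟩ = i := Fin.ext rfl
      rw [this]
    · have : big ⟨i.1 - 12, by omega⟩ = i := Fin.ext (by simp [big]; omega)
      rw [← this]
      exact h _

instance decAux (v : Fin 24 → ZMod 2) :
    Decidable (∀ i : Fin 12, v (big i) = ∑ j : Fin 12, v (emb j) * gen j (big i)) :=
  decidable_of_iff (∀ i : Fin 12, v (big i) = v (emb 0) * gen 0 (big i) + (v (emb 1) * gen 1 (big i) + (v (emb 2) * gen 2 (big i) + (v (emb 3) * gen 3 (big i) + (v (emb 4) * gen 4 (big i) + (v (emb 5) * gen 5 (big i) + (v (emb 6) * gen 6 (big i) + (v (emb 7) * gen 7 (big i) + (v (emb 8) * gen 8 (big i) + (v (emb 9) * gen 9 (big i) + (v (emb 10) * gen 10 (big i) + (v (emb 11) * gen 11 (big i) + (0)))))))))))))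
    (forall_congr' fun i => by rw [sum12 (fun j => v (emb j) * gen j (big i))])

instance (v : Fin 24 → ZMod 2) : Decidable (codePred v) :=
  decidable_of_iff _ (codePred_iff v).symm

def code : Submodule (ZMod 2) (Fin 24 → ZMod 2) where
  carrier := {v | codePred v}
  zero_mem' := by
    intro i
    simp [Pi.zero_apply]
  add_mem' := by
    intro v w hv hw
    intro i
    have hv' : codePred v := hv
    have hw' : codePred w := hw
    simp only [Pi.add_apply]
    rw [hv' i, hw' i, ← Finset.sum_add_distrib]
    exact Finset.sum_congr rfl fun j _ => (add_mul _ _ _).symm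
  smul_mem' := by
    intro c v hv
    intro i
    have hv' : codePred v := hv
    simp only [Pi.smul_apply, smul_eq_mul]
    rw [hv' i, Finset.mul_sum]
    exact Finset.sum_congr rfl fun j _ => (mul_assoc _ _ _).symm

lemma mem_code_iff (v : Fin 24 → ZMod 2) : v ∈ code ↔ codePred v := Iff.rfl

lemma comp_mem {w : Fin 24 → ZMod 2} (hw : codePred w) {τ : Fin 24 → Fin 24}
    (h : ∀ j, codePred (gen j ∘ τ)) : codePred (w ∘ τ) := by
  have hco : w ∘ τ = ∑ j : Fin 12, w (emb j) • (gen j ∘ τ) := by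
    funext i
    simp only [Function.comp_apply, Finset.sum_apply, Pi.smul_apply, smul_eq_mul]
    exact hw (τ i)
  have hmem : (w ∘ τ) ∈ code := by
    rw [hco]
    exact Submodule.sum_mem _ fun j _ => Submodule.smul_mem _ _ (h j)
  exact hmem

def G : Subgroup (Equiv.Perm (Fin 24)) where
  carrier := {σ | ∀ v, codePred v ↔ codePred (v ∘ ⇑σ)}
  one_mem' := fun _ => Iff.rfl
  mul_mem' := by
    intro a b ha hb
    intro v
    exact (ha v).trans (hb (v ∘ ⇑a))
  inv_mem' := by
    intro a ha
    intro v
    have h := ha (v ∘ ⇑a⁻¹)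
    have e : (v ∘ ⇑a⁻¹) ∘ ⇑a = v := by
      funext x
      simp
    rw [e] at h
    exact h.symm

lemma mem_G_iff (σ : Equiv.Perm (Fin 24)) :
    σ ∈ G ↔ ∀ v, codePred v ↔ codePred (v ∘ ⇑σ) := Iff.rfl

lemma mem_G_of_forward (σ : Equiv.Perm (Fin 24)) (h1 : ∀ j, codePred (gen j ∘ ⇑σ)) :
    σ ∈ G := by
  have fwd : ∀ w : Fin 24 → ZMod 2, codePred w → codePred (w ∘ ⇑σ) :=
    fun w hw => comp_mem hw h1
  let T : {v : Fin 24 → ZMod 2 // codePred v} → {v : Fin 24 → ZMod 2 // codePred v} :=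
    fun v => ⟨v.1 ∘ ⇑σ, fwd v.1 v.2⟩
  have hT : Function.Injective T := by
    intro a b hab
    apply Subtype.ext
    have hcomp : a.1 ∘ ⇑σ = b.1 ∘ ⇑σ := congrArg Subtype.val hab
    funext x
    have := congrFun hcomp (σ.symm x)
    simpa using this
  have hsurj : Function.Surjective T := Finite.surjective_of_injective hT
  rw [mem_G_iff]
  intro v
  constructor
  · exact fwd v
  · intro hw
    obtain ⟨u, hu⟩ := hsurj ⟨v ∘ ⇑σ, hw⟩
    have hcomp : u.1 ∘ ⇑σ = v ∘ ⇑σ := congrArg Subtype.val hu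
    have huv : u.1 = v := by
      funext x
      have := congrFun hcomp (σ.symm x)
      simpa using this
    exact huv ▸ u.2

def tbl (k : Fin 5) (x : Fin 24) (i : Fin 24) : Fin 24 :=
  ⟨(tblN k x >>> (5 * i.1)) % 32 % 24, Nat.mod_lt _ (by norm_num)⟩

def tblInv (k : Fin 5) (x : Fin 24) (i : Fin 24) : Fin 24 :=
  ⟨(tblInvN k x >>> (5 * i.1)) % 32 % 24, Nat.mod_lt _ (by norm_num)⟩

lemma tbl_left : ∀ k x i, tblInv k x (tbl k x i) = i := by decide

lemma tbl_right : ∀ k x i, tbl k x (tblInv k x i) = i := by decide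

def U (k : Fin 5) (x : Fin 24) : Equiv.Perm (Fin 24) :=
  ⟨tbl k x, tblInv k x, tbl_left k x, tbl_right k x⟩

set_option maxHeartbeats 8000000 in
lemma U_code0 : ∀ (x : Fin 24) (j : Fin 12), codePred (fun i => gen j (tbl 0 x i)) := by decide
set_option maxHeartbeats 8000000 in
lemma U_code1 : ∀ (x : Fin 24) (j : Fin 12), codePred (fun i => gen j (tbl 1 x i)) := by decide
set_option maxHeartbeats 8000000 in
lemma U_code2 : ∀ (x : Fin 24) (j : Fin 12), codePred (fun i => gen j (tbl 2 x i)) := by decide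
set_option maxHeartbeats 8000000 in
lemma U_code3 : ∀ (x : Fin 24) (j : Fin 12), codePred (fun i => gen j (tbl 3 x i)) := by decide
set_option maxHeartbeats 8000000 in
lemma U_code4 : ∀ (x : Fin 24) (j : Fin 12), codePred (fun i => gen j (tbl 4 x i)) := by decide

lemma U_code : ∀ (k : Fin 5) (x : Fin 24) (j : Fin 12), codePred (fun i => gen j (tbl k x i)) := by
  intro k
  match k with
  | 0 => exact U_code0
  | 1 => exact U_code1
  | 2 => exact U_code2
  | 3 => exact U_code3
  | 4 => exact U_code4

lemma U_mem (k : Fin 5) (x : Fin 24) : U k x ∈ G :=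
  mem_G_of_forward (U k x) (fun j => U_code k x j)

def base : Fin 5 → Fin 24 := ![0, 1, 2, 3, 4]

lemma U_spec : ∀ (k : Fin 5) (x : Fin 24), (∀ i : Fin 5, i < k → x ≠ base i) →
    (∀ i : Fin 5, i < k → tbl k x (base i) = base i) ∧ tbl k x x = base k := by decide

lemma chain (k : Fin 5) (x : Fin 24) (hx : ∀ i : Fin 5, i < k → x ≠ base i) :
    ∃ g ∈ G, (∀ i : Fin 5, i < k → g (base i) = base i) ∧ g x = base k :=
  ⟨U k x, U_mem k x, (U_spec k x hx).1, (U_spec k x hx).2⟩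

lemma base_inj : Function.Injective base := by decide

lemma exists_to_base (v : Fin 5 → Fin 24) (hv : Function.Injective v) :
    ∃ g ∈ G, ∀ i, g (v i) = base i := by
  suffices h : ∀ k : ℕ, k ≤ 5 → ∃ g ∈ G, ∀ i : Fin 5, (i : ℕ) < k → g (v i) = base i by
    obtain ⟨g, hg, hgi⟩ := h 5 le_rfl
    exact ⟨g, hg, fun i => hgi i i.isLt⟩
  intro k
  induction k with
  | zero => exact fun _ => ⟨1, one_mem G, fun i hi => absurd hi (Nat.not_lt_zero _)⟩
  | succ k ih =>
    intro hk5
    obtain ⟨g, hg, hgi⟩ := ih (Nat.le_of_succ_le hk5)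
    set kk : Fin 5 := ⟨k, hk5⟩ with hkk
    have hx : ∀ i : Fin 5, i < kk → g (v kk) ≠ base i := by
      intro i hi heq
      rw [← hgi i hi] at heq
      have hkki : kk = i := hv (g.injective heq)
      rw [hkki] at hi
      exact lt_irrefl _ hi
    obtain ⟨h, hG, hfix, hmap⟩ := chain kk (g (v kk)) hx
    refine ⟨h * g, mul_mem hG hg, ?_⟩
    intro i hi
    rcases Nat.lt_succ_iff_lt_or_eq.mp hi with hlt | heq
    · show h (g (v i)) = base i
      rw [hgi i hlt, hfix i hlt]
    · have hik : i = kk := Fin.ext heq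
      show h (g (v i)) = base i
      rw [hik]
      exact hmap
  
lemma trans5 : ∀ v w : Fin 5 → Fin 24, Function.Injective v → Function.Injective w →
    ∃ g ∈ G, ∀ i, g (v i) = w i := by
  intro v w hv hw
  obtain ⟨gv, hgv, hgvi⟩ := exists_to_base v hv
  obtain ⟨gw, hgw, hgwi⟩ := exists_to_base w hw
  refine ⟨gw⁻¹ * gv, mul_mem (inv_mem hgw) hgv, fun i => ?_⟩
  show gw⁻¹ (gv (v i)) = w i
  rw [hgvi i, ← hgwi i]
  simp

lemma dleft : ∀ i, dinv (dfun i) = i := by decide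
lemma dright : ∀ i, dfun (dinv i) = i := by decide

def d : Equiv.Perm (Fin 24) := ⟨dfun, dinv, dleft, dright⟩

lemma hw0 : codePred w0 := by decide

lemma hnc : ¬ codePred (fun i => w0 (dfun (dfun i))) := by decide

lemma c_not_mem : d ^ 2 ∉ G := by
  intro hmem
  have h := ((mem_G_iff _).mp hmem w0).mp hw0
  exact hnc h

lemma card_lt : Nat.card G < Nat.factorial 24 / 2 := by
  by_contra hlt
  push_neg at hlt
  have hdvd : (2 : ℕ) ∣ Nat.factorial 24 := Nat.dvd_factorial (by norm_num) (by norm_num)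
  have hK : Nat.factorial 24 / 2 * 2 = Nat.factorial 24 := Nat.div_mul_cancel hdvd
  have hKpos : 0 < Nat.factorial 24 / 2 :=
    Nat.div_pos (le_trans (by norm_num) (Nat.self_le_factorial 24)) (by norm_num)
  have hmul : Nat.card G * G.index = Nat.factorial 24 := by
    rw [Subgroup.card_mul_index, Nat.card_eq_fintype_card, Fintype.card_perm, Fintype.card_fin]
  have hne : G.index ≠ 0 := by
    intro h0
    rw [h0, mul_zero] at hmul
    exact Nat.factorial_ne_zero 24 hmul.symm
  have hidx : G.index ≤ 2 := by
    by_contra hi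
    push_neg at hi
    have h3 : Nat.factorial 24 / 2 * 3 ≤ Nat.card G * G.index :=
      Nat.mul_le_mul hlt hi
    rw [hmul] at h3
    omega
  have h12 : G.index = 1 ∨ G.index = 2 := by omega
  rcases h12 with h1 | h2
  · have htop : G = ⊤ := Subgroup.index_eq_one.mp h1
    exact c_not_mem (htop ▸ Subgroup.mem_top _)
  · exact c_not_mem (Subgroup.sq_mem_of_index_two h2 d)

end M24aux



/-- A subgroup `G` of the permutations of `X` acts `k`-transitively if any ordered
`k`-tuple of distinct elements of `X` can be mapped to any other by some element of `G`. -/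
def IsMultiplyTransitive {X : Type*} (G : Subgroup (Equiv.Perm X)) (k : ℕ) : Prop :=
  ∀ v w : Fin k → X, Function.Injective v → Function.Injective w →
    ∃ g ∈ G, ∀ i, g (v i) = w i

/-- The Mathieu group M24 exists: a subgroup of the symmetric group on 24 points which acts
5-transitively but whose order is strictly less than 24!/2, so it is a proper subgroup of
the alternating group. -/
theorem mathieu_M24_exists :
    ∃ G : Subgroup (Equiv.Perm (Fin 24)),
      IsMultiplyTransitive G 5 ∧ Nat.card G < Nat.factorial 24 / 2 :=
  ⟨M24aux.G, M24aux.trans5, M24aux.card_lt⟩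
end

section
/- The subgroup of Sym(Fin 7) generated by the 7-cycle (0 1 2 3 4 5 6) and the permutation (2 4)(5 6) acts 2-transitively on Fin 7 and has index 30 in Sym(Fin 7). -/
namespace MathieuAux

abbrev a : Equiv.Perm (Fin 7) := finRotate 7
abbrev b : Equiv.Perm (Fin 7) := Equiv.swap (2 : Fin 7) 4 * Equiv.swap 5 6

def evalWord (w : List Bool) : Equiv.Perm (Fin 7) :=
  (w.map fun t => if t then a else b).prod

def toCode (g : Equiv.Perm (Fin 7)) : List ℕ :=
  (List.finRange 7).map fun i => (g i : ℕ)

def cmul (f g : List ℕ) : List ℕ := g.map fun i => f.getD i 0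

def ca : List ℕ := [1,2,3,4,5,6,0]
def cb : List ℕ := [0,1,4,3,2,6,5]
def cid : List ℕ := [0,1,2,3,4,5,6]

def cEval (w : List Bool) : List ℕ :=
  (w.map fun t => if t then ca else cb).foldr cmul cid

def words : List (List Bool) := [
  [],
  [true],
  [false],
  [true,true],
  [true,false],
  [false,true],
  [true,true,true],
  [true,true,false],
  [true,false,true],
  [false,true,true],
  [false,true,false],
  [true,true,true,true],
  [true,true,true,false],
  [true,true,false,true],
  [true,false,true,true],
  [true,false,true,false],
  [false,true,true,true],
  [false,true,true,false],
  [false,true,false,true],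
  [true,true,true,true,true],
  [true,true,true,true,false],
  [true,true,true,false,true],
  [true,true,false,true,true],
  [true,true,false,true,false],
  [true,false,true,true,true],
  [true,false,true,true,false],
  [true,false,true,false,true],
  [false,true,true,true,true],
  [false,true,true,true,false],
  [false,true,true,false,true],
  [false,true,false,true,true],
  [false,true,false,true,false],
  [true,true,true,true,true,true],
  [true,true,true,true,true,false],
  [true,true,true,true,false,true],
  [true,true,true,false,true,true],
  [true,true,true,false,true,false],
  [true,true,false,true,true,true],
  [true,true,false,true,true,false],
  [true,true,false,true,false,true],
  [true,false,true,true,true,true],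
  [true,false,true,true,true,false],
  [true,false,true,false,true,true],
  [true,false,true,false,true,false],
  [false,true,true,true,true,false],
  [false,true,true,true,false,true],
  [false,true,true,false,true,false],
  [false,true,false,true,true,true],
  [false,true,false,true,true,false],
  [false,true,false,true,false,true],
  [true,true,true,true,true,false,true],
  [true,true,true,true,false,true,true],
  [true,true,true,true,false,true,false],
  [true,true,true,false,true,true,true],
  [true,true,true,false,true,true,false],
  [true,true,true,false,true,false,true],
  [true,true,false,true,true,true,true],
  [true,true,false,true,true,true,false],
  [true,true,false,true,false,true,true],
  [true,true,false,true,false,true,false],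
  [true,false,true,true,true,true,false],
  [true,false,true,true,true,false,true],
  [true,false,true,false,true,true,true],
  [true,false,true,false,true,true,false],
  [false,true,true,true,true,false,true],
  [false,true,true,true,false,true,true],
  [false,true,true,true,false,true,false],
  [false,true,true,false,true,false,true],
  [false,true,false,true,true,true,true],
  [false,true,false,true,true,true,false],
  [false,true,false,true,false,true,true],
  [true,true,true,true,true,false,true,true],
  [true,true,true,true,true,false,true,false],
  [true,true,true,true,false,true,true,true],
  [true,true,true,true,false,true,true,false],
  [true,true,true,true,false,true,false,true],
  [true,true,true,false,true,true,true,true],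
  [true,true,true,false,true,true,true,false],
  [true,true,true,false,true,false,true,true],
  [true,true,true,false,true,false,true,false],
  [true,true,false,true,true,true,true,false],
  [true,true,false,true,true,true,false,true],
  [true,true,false,true,false,true,true,true],
  [true,true,false,true,false,true,true,false],
  [true,false,true,true,true,true,false,true],
  [true,false,true,true,true,false,true,true],
  [true,false,true,true,true,false,true,false],
  [true,false,true,false,true,true,true,true],
  [true,false,true,false,true,true,true,false],
  [false,true,true,true,true,false,true,true],
  [false,true,true,true,true,false,true,false],
  [false,true,true,true,false,true,true,true],
  [false,true,true,true,false,true,true,false],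
  [false,true,true,true,false,true,false,true],
  [false,true,true,false,true,false,true,true],
  [false,true,true,false,true,false,true,false],
  [false,true,false,true,true,true,true,false],
  [false,true,false,true,false,true,true,true],
  [false,true,false,true,false,true,true,false],
  [true,true,true,true,true,false,true,true,true],
  [true,true,true,true,true,false,true,true,false],
  [true,true,true,true,true,false,true,false,true],
  [true,true,true,true,false,true,true,true,true],
  [true,true,true,true,false,true,true,true,false],
  [true,true,true,true,false,true,false,true,true],
  [true,true,true,true,false,true,false,true,false],
  [true,true,true,false,true,true,true,true,false],
  [true,true,true,false,true,true,true,false,true],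
  [true,true,true,false,true,false,true,true,true],
  [true,true,true,false,true,false,true,true,false],
  [true,true,false,true,true,true,true,false,true],
  [true,true,false,true,true,true,false,true,true],
  [true,true,false,true,true,true,false,true,false],
  [true,true,false,true,false,true,true,true,true],
  [true,true,false,true,false,true,true,true,false],
  [true,false,true,true,true,true,false,true,true],
  [true,false,true,true,true,true,false,true,false],
  [true,false,true,true,true,false,true,true,true],
  [true,false,true,true,true,false,true,true,false],
  [true,false,true,true,true,false,true,false,true],
  [true,false,true,false,true,true,true,true,false],
  [false,true,true,true,true,false,true,true,true],
  [false,true,true,true,true,false,true,false,true],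
  [false,true,true,true,false,true,true,true,true],
  [false,true,true,true,false,true,false,true,true],
  [false,true,true,true,false,true,false,true,false],
  [false,true,true,false,true,false,true,true,true],
  [false,true,true,false,true,false,true,true,false],
  [false,true,false,true,true,true,true,false,true],
  [false,true,false,true,false,true,true,true,true],
  [false,true,false,true,false,true,true,true,false],
  [true,true,true,true,true,false,true,false,true,true],
  [true,true,true,true,true,false,true,false,true,false],
  [true,true,true,true,false,true,true,true,true,false],
  [true,true,true,true,false,true,true,true,false,true],
  [true,true,true,true,false,true,false,true,true,true],
  [true,true,true,true,false,true,false,true,true,false],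
  [true,true,true,false,true,true,true,true,false,true],
  [true,true,true,false,true,true,true,false,true,true],
  [true,true,true,false,true,true,true,false,true,false],
  [true,true,true,false,true,false,true,true,true,true],
  [true,true,false,true,true,true,false,true,true,true],
  [true,true,false,true,true,true,false,true,true,false],
  [true,true,false,true,false,true,true,true,true,false],
  [true,false,true,true,true,true,false,true,true,true],
  [true,false,true,true,true,true,false,true,false,true],
  [true,false,true,true,true,false,true,true,true,true],
  [true,false,true,true,true,false,true,false,true,true],
  [true,false,true,true,true,false,true,false,true,false],
  [true,false,true,false,true,true,true,true,false,true],
  [false,true,true,true,true,false,true,true,true,true],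
  [false,true,true,true,true,false,true,false,true,true],
  [false,true,true,true,false,true,false,true,true,false],
  [false,true,true,false,true,false,true,true,true,true],
  [false,true,true,false,true,false,true,true,true,false],
  [false,true,false,true,true,true,true,false,true,false],
  [true,true,true,true,true,false,true,false,true,true,true],
  [true,true,true,true,true,false,true,false,true,true,false],
  [true,true,true,true,false,true,true,true,true,false,true],
  [true,true,true,true,false,true,true,true,false,true,true],
  [true,true,true,false,true,true,true,false,true,true,false],
  [true,true,true,false,true,false,true,true,true,true,false],
  [true,true,false,true,true,true,false,true,true,true,true],
  [true,false,true,true,true,true,false,true,true,true,true],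
  [true,false,true,true,true,false,true,false,true,true,false],
  [true,false,true,false,true,true,true,true,false,true,false],
  [false,true,true,true,true,false,true,true,true,true,false],
  [false,true,false,true,true,true,true,false,true,false,true]]

def codes : List (List Nat) := [
  [0,1,2,3,4,5,6],
  [1,2,3,4,5,6,0],
  [0,1,4,3,2,6,5],
  [2,3,4,5,6,0,1],
  [1,2,5,4,3,0,6],
  [1,4,3,2,6,5,0],
  [3,4,5,6,0,1,2],
  [2,3,6,5,4,1,0],
  [2,5,4,3,0,6,1],
  [4,3,2,6,5,0,1],
  [1,4,6,2,3,0,5],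
  [4,5,6,0,1,2,3],
  [3,4,0,6,5,2,1],
  [3,6,5,4,1,0,2],
  [5,4,3,0,6,1,2],
  [2,5,0,3,4,1,6],
  [3,2,6,5,0,1,4],
  [4,3,5,6,2,1,0],
  [4,6,2,3,0,5,1],
  [5,6,0,1,2,3,4],
  [4,5,1,0,6,3,2],
  [4,0,6,5,2,1,3],
  [6,5,4,1,0,2,3],
  [3,6,1,4,5,2,0],
  [4,3,0,6,1,2,5],
  [5,4,6,0,3,2,1],
  [5,0,3,4,1,6,2],
  [2,6,5,0,1,4,3],
  [3,2,0,5,6,4,1],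
  [3,5,6,2,1,0,4],
  [6,2,3,0,5,1,4],
  [4,6,0,3,2,1,5],
  [6,0,1,2,3,4,5],
  [5,6,2,1,0,4,3],
  [5,1,0,6,3,2,4],
  [0,6,5,2,1,3,4],
  [4,0,2,5,6,3,1],
  [5,4,1,0,2,3,6],
  [6,5,0,1,4,3,2],
  [6,1,4,5,2,0,3],
  [3,0,6,1,2,5,4],
  [4,3,1,6,0,5,2],
  [0,3,4,1,6,2,5],
  [5,0,1,4,3,2,6],
  [2,6,1,0,5,3,4],
  [2,0,5,6,4,1,3],
  [3,5,1,2,6,4,0],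
  [2,3,0,5,1,4,6],
  [6,2,5,0,3,4,1],
  [6,0,3,2,1,5,4],
  [6,2,1,0,4,3,5],
  [1,0,6,3,2,4,5],
  [5,1,3,6,0,4,2],
  [6,5,2,1,3,4,0],
  [0,6,1,2,5,4,3],
  [0,2,5,6,3,1,4],
  [4,1,0,2,3,6,5],
  [5,4,2,0,1,6,3],
  [1,4,5,2,0,3,6],
  [6,1,2,5,4,3,0],
  [3,0,2,1,6,4,5],
  [3,1,6,0,5,2,4],
  [3,4,1,6,2,5,0],
  [0,3,6,1,4,5,2],
  [6,1,0,5,3,4,2],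
  [0,5,6,4,1,3,2],
  [2,0,4,6,5,3,1],
  [5,1,2,6,4,0,3],
  [3,0,5,1,4,6,2],
  [2,3,1,5,0,6,4],
  [0,3,2,1,5,4,6],
  [2,1,0,4,3,5,6],
  [6,2,4,0,1,5,3],
  [0,6,3,2,4,5,1],
  [1,0,2,3,6,5,4],
  [1,3,6,0,4,2,5],
  [5,2,1,3,4,0,6],
  [6,5,3,1,2,0,4],
  [2,5,6,3,1,4,0],
  [0,2,3,6,5,4,1],
  [4,1,3,2,0,5,6],
  [4,2,0,1,6,3,5],
  [4,5,2,0,3,6,1],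
  [1,4,0,2,5,6,3],
  [0,2,1,6,4,5,3],
  [1,6,0,5,2,4,3],
  [3,1,5,0,6,4,2],
  [4,1,6,2,5,0,3],
  [3,4,2,6,1,0,5],
  [1,0,5,3,4,2,6],
  [6,1,3,5,0,2,4],
  [5,6,4,1,3,2,0],
  [0,5,1,4,6,2,3],
  [0,4,6,5,3,1,2],
  [1,2,6,4,0,3,5],
  [5,1,4,6,2,3,0],
  [3,0,4,1,5,2,6],
  [3,2,1,5,4,6,0],
  [0,3,5,1,2,6,4],
  [1,0,4,3,5,6,2],
  [2,1,3,4,0,6,5],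
  [2,4,0,1,5,3,6],
  [6,3,2,4,5,1,0],
  [0,6,4,2,3,1,5],
  [3,6,0,4,2,5,1],
  [1,3,4,0,6,5,2],
  [5,2,4,3,1,6,0],
  [5,3,1,2,0,4,6],
  [5,6,3,1,4,0,2],
  [2,5,1,3,6,0,4],
  [1,3,2,0,5,6,4],
  [2,0,1,6,3,5,4],
  [4,2,6,1,0,5,3],
  [5,2,0,3,6,1,4],
  [4,5,3,0,2,1,6],
  [2,1,6,4,5,3,0],
  [0,2,4,6,1,3,5],
  [6,0,5,2,4,3,1],
  [1,6,2,5,0,3,4],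
  [1,5,0,6,4,2,3],
  [4,1,5,2,6,3,0],
  [0,5,3,4,2,6,1],
  [1,3,5,0,2,4,6],
  [6,4,1,3,2,0,5],
  [4,6,5,3,1,2,0],
  [0,4,3,5,6,2,1],
  [2,6,4,0,3,5,1],
  [1,2,0,4,6,5,3],
  [0,4,1,5,2,6,3],
  [2,1,5,4,6,0,3],
  [3,2,4,5,1,0,6],
  [4,0,1,5,3,6,2],
  [2,4,5,1,0,6,3],
  [6,3,5,4,2,0,1],
  [6,4,2,3,1,5,0],
  [6,0,4,2,5,1,3],
  [3,6,2,4,0,1,5],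
  [2,4,3,1,6,0,5],
  [3,1,2,0,4,6,5],
  [5,3,0,2,1,6,4],
  [6,3,1,4,0,2,5],
  [0,1,6,3,5,4,2],
  [2,0,3,6,1,4,5],
  [5,2,6,3,0,4,1],
  [1,6,4,5,3,0,2],
  [2,4,6,1,3,5,0],
  [0,5,2,4,3,1,6],
  [5,0,6,4,2,3,1],
  [1,5,4,6,0,3,2],
  [1,5,2,6,3,0,4],
  [5,3,4,2,6,1,0],
  [3,5,0,2,4,6,1],
  [4,6,1,3,5,0,2],
  [6,4,0,3,5,1,2],
  [2,6,3,0,4,1,5],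
  [0,4,2,5,1,3,6],
  [0,1,5,3,6,2,4],
  [4,0,3,5,1,2,6],
  [3,5,4,2,0,1,6],
  [4,2,3,1,5,0,6],
  [3,1,4,0,2,5,6],
  [6,3,0,4,1,5,2],
  [1,6,3,5,4,2,0],
  [6,4,5,3,0,2,1],
  [5,0,2,4,6,1,3],
  [1,5,3,6,2,4,0],
  [5,3,6,2,4,0,1],
  [4,2,5,1,3,6,0]]

lemma getD_toCode (f : Equiv.Perm (Fin 7)) (j : Fin 7) :
    (toCode f).getD (j : ℕ) 0 = (f j : ℕ) := by
  fin_cases j <;> rfl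

lemma toCode_mul (f g : Equiv.Perm (Fin 7)) :
    toCode (f * g) = cmul (toCode f) (toCode g) := by
  simp only [toCode, cmul, List.map_map]
  refine List.map_congr_left fun i _ => ?_
  simp only [Function.comp_apply, Equiv.Perm.mul_apply]
  exact (getD_toCode f (g i)).symm

lemma toCode_injective : Function.Injective toCode := by
  intro f g h
  ext i
  have h1 := getD_toCode f i
  have h2 := getD_toCode g i
  rw [h] at h1
  exact h1.symm.trans h2

lemma toCode_a : toCode a = ca := by decide
lemma toCode_b : toCode b = cb := by decide
lemma toCode_one : toCode 1 = cid := by decide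

lemma toCode_evalWord (w : List Bool) : toCode (evalWord w) = cEval w := by
  induction w with
  | nil => exact toCode_one
  | cons t w ih =>
    simp only [evalWord, cEval, List.map_cons, List.prod_cons, List.foldr_cons] at *
    rw [toCode_mul, ih]
    cases t
    · rw [if_neg (by simp), if_neg (by simp), toCode_b]
    · rw [if_pos rfl, if_pos rfl, toCode_a]


set_option maxRecDepth 100000

lemma hmap : words.map cEval = codes := by decide
lemma hclosed : ∀ c ∈ codes, cmul ca c ∈ codes ∧ cmul cb c ∈ codes := by decide
lemma hnodup : codes.Nodup := by decide
lemma hcid : cid ∈ codes := by decide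
lemma hpair : ∀ x y : Fin 7, x ≠ y →
    ∃ c ∈ codes, c.getD 0 0 = (x : ℕ) ∧ c.getD 1 0 = (y : ℕ) := by decide


abbrev G7 : Subgroup (Equiv.Perm (Fin 7)) :=
  Subgroup.closure {a, b}

def KS : Finset (Equiv.Perm (Fin 7)) := Finset.univ.filter fun g => toCode g ∈ codes

lemma mem_KS {g : Equiv.Perm (Fin 7)} : g ∈ KS ↔ toCode g ∈ codes := by
  simp [KS]

lemma evalWord_mem_closure (w : List Bool) : evalWord w ∈ G7 := by
  refine Subgroup.list_prod_mem _ fun x hx => ?_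
  simp only [List.mem_map] at hx
  obtain ⟨t, -, rfl⟩ := hx
  cases t
  · exact Subgroup.subset_closure (by simp)
  · exact Subgroup.subset_closure (by simp)

lemma exists_word_of_code {g : Equiv.Perm (Fin 7)} (h : toCode g ∈ codes) :
    ∃ w ∈ words, evalWord w = g := by
  rw [← hmap, List.mem_map] at h
  obtain ⟨w, hw, hcw⟩ := h
  exact ⟨w, hw, toCode_injective (by rw [toCode_evalWord, hcw])⟩

lemma KS_subset : ∀ g ∈ KS, g ∈ G7 := by
  intro g hg
  obtain ⟨w, -, rfl⟩ := exists_word_of_code (mem_KS.mp hg)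
  exact evalWord_mem_closure w

lemma one_mem_KS : (1 : Equiv.Perm (Fin 7)) ∈ KS := by
  rw [mem_KS, toCode_one]; exact hcid

lemma mul_mem_KS : ∀ g ∈ G7, ∀ k ∈ KS, g * k ∈ KS := by
  intro g hg
  induction hg using Subgroup.closure_induction with
  | mem x hx =>
    intro k hk
    rw [mem_KS, toCode_mul]
    rcases hx with rfl | rfl
    · rw [toCode_a]; exact (hclosed _ (mem_KS.mp hk)).1
    · rw [toCode_b]; exact (hclosed _ (mem_KS.mp hk)).2
  | one => intro k hk; simpa using hk
  | mul x y hx hy ihx ihy =>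
    intro k hk
    rw [mul_assoc]
    exact ihx _ (ihy _ hk)
  | inv x hx ih =>
    intro k hk
    have himg : KS.image (x * ·) ⊆ KS := by
      intro y hy
      simp only [Finset.mem_image] at hy
      obtain ⟨k', hk', rfl⟩ := hy
      exact ih _ hk'
    have hcardeq : (KS.image (x * ·)).card = KS.card :=
      Finset.card_image_of_injective _ (mul_right_injective x)
    have heq : KS.image (x * ·) = KS :=
      Finset.eq_of_subset_of_card_le himg (le_of_eq hcardeq.symm)
    rw [← heq] at hk
    simp only [Finset.mem_image] at hk
    obtain ⟨k', hk', rfl⟩ := hk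
    simpa using hk'

lemma closure_subset_KS : ∀ g ∈ G7, g ∈ KS := by
  intro g hg
  have := mul_mem_KS g hg 1 one_mem_KS
  simpa using this

def elems : List (Equiv.Perm (Fin 7)) := words.map evalWord

lemma elems_map_toCode : elems.map toCode = codes := by
  rw [elems, List.map_map, ← hmap]
  exact List.map_congr_left fun w _ => toCode_evalWord w

lemma elems_nodup : elems.Nodup :=
  List.Nodup.of_map toCode (elems_map_toCode ▸ hnodup)

lemma KS_eq : KS = elems.toFinset := by
  apply Finset.Subset.antisymm
  · intro g hg
    obtain ⟨w, hw, rfl⟩ := exists_word_of_code (mem_KS.mp hg)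
    simp only [List.mem_toFinset, elems]
    exact List.mem_map_of_mem hw
  · intro g hg
    simp only [List.mem_toFinset, elems, List.mem_map] at hg
    obtain ⟨w, hw, rfl⟩ := hg
    rw [mem_KS, toCode_evalWord, ← hmap]
    exact List.mem_map_of_mem hw

lemma words_length : words.length = 168 := by decide

lemma KS_card : KS.card = 168 := by
  rw [KS_eq, List.toFinset_card_of_nodup elems_nodup, elems, List.length_map,
    words_length]

lemma card_G7 : Nat.card G7 = 168 := by
  have hset : (G7 : Set (Equiv.Perm (Fin 7))) = ↑KS :=
    Set.ext fun g => ⟨closure_subset_KS g, KS_subset g⟩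
  rw [← SetLike.coe_sort_coe, hset, Nat.card_coe_set_eq, Set.ncard_coe_finset,
    KS_card]

lemma index_G7 : G7.index = 30 := by
  have h := Subgroup.index_mul_card G7
  rw [card_G7, Nat.card_eq_fintype_card, Fintype.card_perm, Fintype.card_fin] at h
  have h7 : Nat.factorial 7 = 5040 := by decide
  rw [h7] at h
  omega

lemma pair_trans : ∀ x y : Fin 7, x ≠ y → ∃ g ∈ G7, g 0 = x ∧ g 1 = y := by
  intro x y hxy
  obtain ⟨c, hc, h0, h1⟩ := hpair x y hxy
  rw [← hmap, List.mem_map] at hc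
  obtain ⟨w, hw, rfl⟩ := hc
  refine ⟨evalWord w, evalWord_mem_closure w, ?_, ?_⟩
  · apply Fin.val_injective
    rw [← h0, ← toCode_evalWord]
    exact (getD_toCode (evalWord w) 0).symm
  · apply Fin.val_injective
    rw [← h1, ← toCode_evalWord]
    exact (getD_toCode (evalWord w) 1).symm

end MathieuAux

/-- The subgroup of `Sym(Fin 7)` generated by the 7-cycle `(0 1 2 3 4 5 6)` and the
permutation `(2 4)(5 6)` acts 2-transitively on `Fin 7` and has index 30. -/
theorem mathieu_seven_letters :
    IsMultiplyTransitive
        (Subgroup.closure {finRotate 7, Equiv.swap (2 : Fin 7) 4 * Equiv.swap 5 6}) 2 ∧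
      (Subgroup.closure
        {finRotate 7, Equiv.swap (2 : Fin 7) 4 * Equiv.swap 5 6}).index = 30 := by
  constructor
  · intro v w hv hw
    obtain ⟨gv, hgv, hgv0, hgv1⟩ :=
      MathieuAux.pair_trans (v 0) (v 1) fun h => absurd (hv h) (by decide)
    obtain ⟨gw, hgw, hgw0, hgw1⟩ :=
      MathieuAux.pair_trans (w 0) (w 1) fun h => absurd (hw h) (by decide)
    refine ⟨gw * gv⁻¹, mul_mem hgw (inv_mem hgv), ?_⟩
    intro i
    fin_cases i
    · show (gw * gv⁻¹) (v 0) = w 0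
      rw [← hgv0, ← hgw0, Equiv.Perm.mul_apply, Equiv.Perm.inv_def, Equiv.symm_apply_apply]
    · show (gw * gv⁻¹) (v 1) = w 1
      rw [← hgv1, ← hgw1, Equiv.Perm.mul_apply, Equiv.Perm.inv_def, Equiv.symm_apply_apply]
  · exact MathieuAux.index_G7
end

section
/- The subgroup of Sym(Fin 11) generated by the affine maps z ↦ z+1 and z ↦ 4z on Z/11Z, together with the permutation (4 3)(5 9)(10 2)(7 6), acts 2-transitively on 11 points and has index 60480 in Sym(Fin 11). -/
instance : Fact (Nat.Prime 11) := ⟨by norm_num⟩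

set_option maxRecDepth 10000

namespace KG

abbrev P := Equiv.Perm (ZMod 11)

def A : P := Equiv.addRight (1 : ZMod 11)
def B : P := Equiv.mulLeft₀ (4 : ZMod 11) (by decide)
def C : P := Equiv.swap (4 : ZMod 11) 3 * Equiv.swap 5 9 * Equiv.swap 10 2 *
              Equiv.swap 7 6

def gens : Set P := {A, B, C}

def H : Subgroup P := Subgroup.closure gens

def gen : Fin 3 → P := ![A, B, C]

def eval (l : List (Fin 3)) : P := (l.map gen).prod

def pairTable : List (List (Fin 3)) := [
  [], [], [2,1,0,2,0,0,1], [2,1], [1], [1,1],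
  [1,0,0,2,0,1,0], [0,0,2,0,1,0], [0,2,0,0,1], [1,1,1], [1,0,2,0,0,1], [1,0,0,2,0,1],
  [], [0], [2,0,2,1], [0,2,1], [0,1], [0,1,1],
  [2,0,1,1], [0,0,0,2,0,1,0], [2,0,1], [2,0], [0,2,0], [0,1,0,0,2,0,1],
  [], [0,0], [0,2,0,2,1], [0,0,2,1], [0,0,1], [0,0,1,1],
  [0,2,0,1,1], [1,0,0,2,0,0,0], [0,2,0,1], [0,0,2,0,1], [0,0,2,0], [2,0,2,0,0,0,0],
  [], [0,0,0], [2,1,0,1], [2,1,2,0], [0,0,0,1], [2,1,0],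
  [2,0,0,0,0], [2,1,0,1,1], [2,0,0,2,0,1], [2,0,0,2,0], [1,0,1,1], [2,0,0,0],
  [], [0,0,0,0], [2,0,0,0,1], [1,2,0], [1,0], [1,0,1],
  [0,2,0,0,0,0], [0,0,2,0,0,0,0], [1,2,0,0,0], [0,2,0,0,2,0], [1,1,0,1], [0,2,0,0,0],
  [], [1,1,2,0], [0,2,0,0,0,1], [0,1,2,0], [0,1,0], [1,1,0],
  [0,1,1,0], [2,0,0,1,1,0], [0,1,2,0,0,0], [0,0,2,0,0,2,0], [0,1,1,0,1], [0,0,2,0,0,0],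
  [], [0,1,1,2,0], [1,2,0,0,1,0], [1,1,2,0,0], [0,0,1,0], [0,0,0,1,0],
  [0,0,1,1,0], [2,0,0,1,0], [2,0,1,1,0,1], [1,1,0,2,0,0,1,0], [1,2,0,0], [1,2,0,0,1],
  [], [0,0,1,1,2,0], [2,0,0,2,0,0,0], [0,1,1,2,0,0], [1,0,2,0], [1,0,0],
  [1,0,0,1], [0,2,0,0,1,0], [2,0,2,0,0,1,0], [2,1,0,0,2,1], [0,1,2,0,0], [1,0,2,0,1],
  [], [1,0,0,2,1], [2,1,0,0,1], [0,2,1,0,0,1], [0,1,0,2,0], [0,1,0,0],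
  [1,0,1,0], [2,1,1,0,1], [2,0,1,0], [1,0,2,0,0,0,1], [1,1,1,0], [2,0,1,2,0],
  [], [1,0,1,2,0], [2,0,2,0], [1,0,2,0,0,1,0], [2,0,2,0,1], [0,0,1,0,0],
  [2,0,0], [0,2,1,1,0,1], [0,2,0,1,0], [2,0,0,1], [0,1,1,1,0], [2,0,0,2,1],
  []]

def repWords : Fin 12 → List (Fin 3) := ![[], [2], [2,0], [2,0,0], [2,0,1], [2,0,2], [2,0,1,0], [2,0,0,1], [2,0,1,1], [2,0,2,1], [2,0,0,2], [2,0,1,2]]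

def rep (r : Fin 12) : P := eval (repWords r)

def elem (m : ZMod 11) (k : ZMod 5) (r : Fin 12) : P :=
  Equiv.addRight m * Equiv.mulLeft₀ ((4 : ZMod 11) ^ k.val) (pow_ne_zero _ (by decide)) * rep r

abbrev T := ZMod 11 × ZMod 5 × Fin 12

def el (t : T) : P := elem t.1 t.2.1 t.2.2

def z11 (x : ZMod 11) : Fin 11 := x
def z5 (x : ZMod 5) : Fin 5 := x

def Ct : Fin 11 → Fin 5 → Fin 12 → (ZMod 11 × ZMod 5 × Fin 12) := ![
  ![
    ![(0,0,1), (0,0,0), (1,0,0), (2,0,0), (1,1,0), (1,0,1), (5,1,0), (2,1,0), (1,2,0), (1,4,1), (2,0,1), (1,1,1)],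
    ![(0,4,1), (0,4,0), (3,4,0), (6,4,0), (3,0,0), (3,4,1), (4,0,0), (6,0,0), (3,1,0), (3,3,1), (6,4,1), (3,0,1)],
    ![(0,3,1), (0,3,0), (9,3,0), (7,3,0), (9,4,0), (9,3,1), (1,4,0), (7,4,0), (9,0,0), (9,2,1), (7,3,1), (9,4,1)],
    ![(0,2,1), (0,2,0), (5,2,0), (10,2,0), (5,3,0), (5,2,1), (3,3,0), (10,3,0), (5,4,0), (5,1,1), (10,2,1), (5,3,1)],
    ![(0,1,1), (0,1,0), (4,1,0), (8,1,0), (4,2,0), (4,1,1), (9,2,0), (8,2,0), (4,3,0), (4,0,1), (8,1,1), (4,2,1)]],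
  ![
    ![(0,0,2), (0,0,5), (10,0,1), (10,0,2), (10,4,1), (10,0,0), (10,4,2), (10,0,4), (10,3,1), (10,1,0), (10,0,5), (10,4,0)],
    ![(0,0,4), (0,0,11), (4,2,9), (10,3,8), (10,0,3), (4,4,6), (10,1,4), (1,1,10), (10,0,7), (4,2,2), (1,1,7), (10,0,10)],
    ![(0,0,8), (10,3,7), (3,1,11), (8,3,9), (3,1,5), (3,1,4), (10,1,1), (10,1,3), (3,1,9), (3,1,8), (8,0,6), (3,1,2)],
    ![(10,3,10), (10,3,3), (10,4,4), (10,4,6), (10,4,8), (10,4,11), (4,2,5), (10,2,2), (7,2,10), (10,4,5), (10,2,9), (7,2,7)],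
    ![(0,2,6), (0,0,9), (10,1,8), (2,4,5), (6,4,10), (6,4,7), (10,4,7), (2,4,9), (10,3,6), (10,1,11), (2,4,2), (6,4,3)]],
  ![
    ![(0,0,3), (0,0,10), (5,0,7), (3,3,11), (10,2,11), (10,2,8), (8,4,9), (3,3,5), (10,2,5), (5,0,10), (3,3,4), (10,2,4)],
    ![(0,0,7), (5,2,8), (6,0,5), (5,0,1), (6,0,9), (6,0,2), (5,1,8), (5,4,1), (5,3,3), (6,0,4), (5,0,0), (6,2,6)],
    ![(5,2,11), (5,2,4), (5,2,6), (2,2,10), (5,0,2), (5,0,9), (5,0,3), (5,1,6), (5,0,4), (4,3,3), (2,2,3), (5,0,5)],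
    ![(5,2,5), (5,2,2), (5,2,3), (5,3,4), (5,2,7), (5,2,10), (6,0,11), (5,3,8), (8,4,11), (8,1,6), (5,3,11), (8,4,8)],
    ![(5,2,9), (5,4,6), (1,4,10), (5,4,7), (5,3,6), (1,4,3), (4,3,10), (9,1,11), (5,1,2), (1,4,7), (9,1,8), (5,1,9)]],
  ![
    ![(0,1,4), (0,1,11), (5,3,9), (7,4,8), (7,1,3), (5,0,6), (7,2,4), (4,2,10), (7,1,7), (5,3,2), (4,2,7), (7,1,10)],
    ![(0,1,8), (7,4,7), (1,2,11), (10,4,9), (1,2,5), (1,2,4), (7,2,1), (7,2,3), (1,2,9), (1,2,8), (10,1,6), (1,2,2)],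
    ![(7,4,10), (7,4,3), (7,0,4), (7,0,6), (7,0,8), (7,0,11), (5,3,5), (7,3,2), (6,3,10), (7,0,5), (7,3,9), (6,3,7)],
    ![(0,3,6), (0,1,9), (7,2,8), (8,0,5), (2,0,10), (2,0,7), (7,0,7), (8,0,9), (7,4,6), (7,2,11), (8,0,2), (2,0,3)],
    ![(0,1,2), (0,1,5), (7,1,1), (7,1,2), (7,0,1), (7,1,0), (7,0,2), (7,1,4), (7,4,1), (7,2,0), (7,1,5), (7,0,0)]],
  ![
    ![(0,1,6), (0,4,9), (8,0,8), (6,3,5), (7,3,10), (7,3,7), (8,3,7), (6,3,9), (8,2,6), (8,0,11), (6,3,2), (7,3,3)],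
    ![(0,4,2), (0,4,5), (8,4,1), (8,4,2), (8,3,1), (8,4,0), (8,3,2), (8,4,4), (8,2,1), (8,0,0), (8,4,5), (8,3,0)],
    ![(0,4,4), (0,4,11), (1,1,9), (8,2,8), (8,4,3), (1,3,6), (8,0,4), (3,0,10), (8,4,7), (1,1,2), (3,0,7), (8,4,10)],
    ![(0,4,8), (8,2,7), (9,0,11), (2,2,9), (9,0,5), (9,0,4), (8,0,1), (8,0,3), (9,0,9), (9,0,8), (2,4,6), (9,0,2)],
    ![(8,2,10), (8,2,3), (8,3,4), (8,3,6), (8,3,8), (8,3,11), (1,1,5), (8,1,2), (10,1,10), (8,3,5), (8,1,9), (10,1,7)]],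
  ![
    ![(2,1,10), (2,1,3), (2,2,4), (2,2,6), (2,2,8), (2,2,11), (3,0,5), (2,0,2), (8,0,10), (2,2,5), (2,0,9), (8,0,7)],
    ![(0,0,6), (0,3,9), (2,4,8), (7,2,5), (10,2,10), (10,2,7), (2,2,7), (7,2,9), (2,1,6), (2,4,11), (7,2,2), (10,2,3)],
    ![(0,3,2), (0,3,5), (2,3,1), (2,3,2), (2,2,1), (2,3,0), (2,2,2), (2,3,4), (2,1,1), (2,4,0), (2,3,5), (2,2,0)],
    ![(0,3,4), (0,3,11), (3,0,9), (2,1,8), (2,3,3), (3,2,6), (2,4,4), (9,4,10), (2,3,7), (3,0,2), (9,4,7), (2,3,10)],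
    ![(0,3,8), (2,1,7), (5,4,11), (6,1,9), (5,4,5), (5,4,4), (2,4,1), (2,4,3), (5,4,9), (5,4,8), (6,3,6), (5,4,2)]],
  ![
    ![(0,1,7), (9,3,8), (2,1,5), (9,1,1), (2,1,9), (2,1,2), (9,2,8), (9,0,1), (9,4,3), (2,1,4), (9,1,0), (2,3,6)],
    ![(9,3,11), (9,3,4), (9,3,6), (8,3,10), (9,1,2), (9,1,9), (9,1,3), (9,2,6), (9,1,4), (5,4,3), (8,3,3), (9,1,5)],
    ![(9,3,5), (9,3,2), (9,3,3), (9,4,4), (9,3,7), (9,3,10), (2,1,11), (9,4,8), (10,0,11), (10,2,6), (9,4,11), (10,0,8)],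
    ![(9,3,9), (9,0,6), (4,0,10), (9,0,7), (9,4,6), (4,0,3), (5,4,10), (3,2,11), (9,2,2), (4,0,7), (3,2,8), (9,2,9)],
    ![(0,1,3), (0,1,10), (9,1,7), (1,4,11), (7,3,11), (7,3,8), (10,0,9), (1,4,5), (7,3,5), (9,1,10), (1,4,4), (7,3,4)]],
  ![
    ![(3,4,11), (3,4,4), (3,4,6), (10,4,10), (3,2,2), (3,2,9), (3,2,3), (3,3,6), (3,2,4), (9,0,3), (10,4,3), (3,2,5)],
    ![(3,4,5), (3,4,2), (3,4,3), (3,0,4), (3,4,7), (3,4,10), (8,2,11), (3,0,8), (7,1,11), (7,3,6), (3,0,11), (7,1,8)],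
    ![(3,4,9), (3,1,6), (5,1,10), (3,1,7), (3,0,6), (5,1,3), (9,0,10), (1,3,11), (3,3,2), (5,1,7), (1,3,8), (3,3,9)],
    ![(0,2,3), (0,2,10), (3,2,7), (4,0,11), (6,4,11), (6,4,8), (7,1,9), (4,0,5), (6,4,5), (3,2,10), (4,0,4), (6,4,4)],
    ![(0,2,7), (3,4,8), (8,2,5), (3,2,1), (8,2,9), (8,2,2), (3,3,8), (3,1,1), (3,0,3), (8,2,4), (3,2,0), (8,4,6)]],
  ![
    ![(4,1,9), (4,3,6), (3,3,10), (4,3,7), (4,2,6), (3,3,3), (1,2,10), (5,0,11), (4,0,2), (3,3,7), (5,0,8), (4,0,9)],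
    ![(0,4,3), (0,4,10), (4,4,7), (9,2,11), (8,1,11), (8,1,8), (2,3,9), (9,2,5), (8,1,5), (4,4,10), (9,2,4), (8,1,4)],
    ![(0,4,7), (4,1,8), (7,4,5), (4,4,1), (7,4,9), (7,4,2), (4,0,8), (4,3,1), (4,2,3), (7,4,4), (4,4,0), (7,1,6)],
    ![(4,1,11), (4,1,4), (4,1,6), (6,1,10), (4,4,2), (4,4,9), (4,4,3), (4,0,6), (4,4,4), (1,2,3), (6,1,3), (4,4,5)],
    ![(4,1,5), (4,1,2), (4,1,3), (4,2,4), (4,1,7), (4,1,10), (7,4,11), (4,2,8), (2,3,11), (2,0,6), (4,2,11), (2,3,8)]],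
  ![
    ![(0,2,8), (6,0,7), (4,3,11), (7,0,9), (4,3,5), (4,3,4), (6,3,1), (6,3,3), (4,3,9), (4,3,8), (7,2,6), (4,3,2)],
    ![(6,0,10), (6,0,3), (6,1,4), (6,1,6), (6,1,8), (6,1,11), (9,4,5), (6,4,2), (2,4,10), (6,1,5), (6,4,9), (2,4,7)],
    ![(0,4,6), (0,2,9), (6,3,8), (10,1,5), (8,1,10), (8,1,7), (6,1,7), (10,1,9), (6,0,6), (6,3,11), (10,1,2), (8,1,3)],
    ![(0,2,2), (0,2,5), (6,2,1), (6,2,2), (6,1,1), (6,2,0), (6,1,2), (6,2,4), (6,0,1), (6,3,0), (6,2,5), (6,1,0)],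
    ![(0,2,4), (0,2,11), (9,4,9), (6,0,8), (6,2,3), (9,1,6), (6,3,4), (5,3,10), (6,2,7), (9,4,2), (5,3,7), (6,2,10)]],
  ![
    ![(1,0,5), (1,0,2), (1,0,3), (1,1,4), (1,0,7), (1,0,10), (10,3,11), (1,1,8), (6,2,11), (6,4,6), (1,1,11), (6,2,8)],
    ![(1,0,9), (1,2,6), (9,2,10), (1,2,7), (1,1,6), (9,2,3), (3,1,10), (4,4,11), (1,4,2), (9,2,7), (4,4,8), (1,4,9)],
    ![(0,3,3), (0,3,10), (1,3,7), (5,1,11), (2,0,11), (2,0,8), (6,2,9), (5,1,5), (2,0,5), (1,3,10), (5,1,4), (2,0,4)],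
    ![(0,3,7), (1,0,8), (10,3,5), (1,3,1), (10,3,9), (10,3,2), (1,4,8), (1,2,1), (1,1,3), (10,3,4), (1,3,0), (10,0,6)],
    ![(1,0,11), (1,0,4), (1,0,6), (7,0,10), (1,3,2), (1,3,9), (1,3,3), (1,4,6), (1,3,4), (3,1,3), (7,0,3), (1,3,5)]]]

def fC (t : T) : T := Ct (z11 t.1) (z5 t.2.1) t.2.2

set_option maxHeartbeats 4000000 in
lemma keyC : ∀ (m : ZMod 11) (k : ZMod 5) (r : Fin 12), C * el (m,k,r) = el (fC (m,k,r)) := by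
  decide

lemma keyA : ∀ (m : ZMod 11) (k : ZMod 5) (r : Fin 12), A * el (m,k,r) = el (m+1,k,r) := by
  decide

lemma keyB : ∀ (m : ZMod 11) (k : ZMod 5) (r : Fin 12), B * el (m,k,r) = el (4*m,k+1,r) := by
  decide

noncomputable def S : Finset P := Finset.image el Finset.univ

lemma memS (t : T) : el t ∈ S := Finset.mem_image_of_mem _ (Finset.mem_univ t)

lemma genS : ∀ g ∈ gens, ∀ s ∈ S, g * s ∈ S := by
  intro g hg s hs
  obtain ⟨⟨m, k, r⟩, -, rfl⟩ := Finset.mem_image.mp hs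
  rcases hg with rfl | rfl | rfl
  · have h := memS (m + 1, k, r); rw [← keyA m k r] at h; exact h
  · have h := memS (4 * m, k + 1, r); rw [← keyB m k r] at h; exact h
  · have h := memS (fC (m, k, r)); rw [← keyC m k r] at h; exact h

lemma oneS : (1 : P) ∈ S := by
  have h : el (0, 0, 0) = 1 := by decide
  exact h ▸ memS _

lemma subS : ∀ g ∈ H, g ∈ S := by
  have key : ∀ g, g ∈ H → ∀ s ∈ S, g * s ∈ S := by
    intro g hg
    induction hg using Subgroup.closure_induction with
    | mem x hx => exact genS x hx
    | one => intro s hs; simpa using hs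
    | mul x y hx hy ihx ihy => intro s hs; rw [mul_assoc]; exact ihx _ (ihy _ hs)
    | inv x hx ih =>
        intro s hs
        have himg : Finset.image (x * ·) S = S := by
          apply Finset.eq_of_subset_of_card_le
          · intro z hz
            obtain ⟨s', hs', rfl⟩ := Finset.mem_image.mp hz
            exact ih _ hs'
          · rw [Finset.card_image_of_injective _ (mul_right_injective x)]
        rw [← himg] at hs
        obtain ⟨s', hs', h⟩ := Finset.mem_image.mp hs
        rw [← h, ← mul_assoc, inv_mul_cancel, one_mul]
        exact hs'
  intro g hg
  simpa using key g hg 1 oneS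

lemma cardT : Fintype.card T = 660 := by
  simp [T, ZMod.card]

lemma cardH_le : Nat.card H ≤ 660 := by
  have hsub : (H : Set P) ⊆ ↑S := fun g hg => subS g hg
  have h1 : (H : Set P).ncard ≤ S.card := by
    have := Set.ncard_le_ncard hsub S.finite_toSet
    rwa [Set.ncard_coe_finset] at this
  have h2 : S.card ≤ 660 := by
    refine le_trans Finset.card_image_le ?_
    rw [Finset.card_univ, cardT]
  have h3 : Nat.card H = (H : Set P).ncard := (Nat.card_coe_set_eq _)
  omega

lemma evalMem : ∀ l : List (Fin 3), eval l ∈ H := by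
  intro l
  induction l with
  | nil => exact one_mem H
  | cons i l ih =>
      have : eval (i :: l) = gen i * eval l := by simp [eval]
      rw [this]
      refine mul_mem ?_ ih
      fin_cases i
      · exact Subgroup.subset_closure (Set.mem_insert _ _)
      · exact Subgroup.subset_closure (Set.mem_insert_of_mem _ (Set.mem_insert _ _))
      · exact Subgroup.subset_closure (Set.mem_insert_of_mem _ (Set.mem_insert_of_mem _ rfl))

instance : Fact (Nat.Prime 5) := ⟨by norm_num⟩
instance : Fact (Nat.Prime 3) := ⟨by norm_num⟩

lemma dvd_of_elem (x : P) (hx : x ∈ H) : orderOf x ∣ Nat.card H := by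
  have h1 := orderOf_dvd_natCard (⟨x, hx⟩ : H)
  have h2 := orderOf_injective H.subtype Subtype.coe_injective ⟨x, hx⟩
  rw [← h2] at h1
  exact h1

lemma Amem : A ∈ H := Subgroup.subset_closure (Set.mem_insert _ _)
lemma Bmem : B ∈ H := Subgroup.subset_closure (Set.mem_insert_of_mem _ (Set.mem_insert _ _))
lemma Cmem : C ∈ H := Subgroup.subset_closure (Set.mem_insert_of_mem _ (Set.mem_insert_of_mem _ rfl))

lemma dvd11 : 11 ∣ Nat.card H := by
  have h : orderOf A = 11 := by
    apply orderOf_eq_prime (by decide) (by decide)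
  have := dvd_of_elem A Amem; rwa [h] at this

lemma dvd5 : 5 ∣ Nat.card H := by
  have h : orderOf B = 5 := by
    apply orderOf_eq_prime (by decide) (by decide)
  have := dvd_of_elem B Bmem; rwa [h] at this

lemma dvd3 : 3 ∣ Nat.card H := by
  have h : orderOf (eval [2, 0]) = 3 := by
    apply orderOf_eq_prime (by decide) (by decide)
  have := dvd_of_elem _ (evalMem [2, 0]); rwa [h] at this

def u : P := C
def v : P := eval [0, 2, 0, 1, 1, 0]

def Vfin : Finset P := {1, u, v, u * v}

lemma memVfin (a : P) : a ∈ Vfin ↔ (a = 1 ∨ a = u ∨ a = v ∨ a = u * v) := by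
  simp [Vfin]

set_option maxHeartbeats 2000000 in
def V : Subgroup P where
  carrier := ↑Vfin
  one_mem' := by rw [Finset.mem_coe]; decide
  mul_mem' := by
    intro a b ha hb
    rw [Finset.mem_coe, memVfin] at *
    rcases ha with rfl | rfl | rfl | rfl <;> rcases hb with rfl | rfl | rfl | rfl <;> decide
  inv_mem' := by
    intro a ha
    rw [Finset.mem_coe, memVfin] at *
    rcases ha with rfl | rfl | rfl | rfl
    · left; exact inv_one
    · right; left; exact inv_eq_of_mul_eq_one_right (by decide)
    · right; right; left; exact inv_eq_of_mul_eq_one_right (by decide)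
    · right; right; right; exact inv_eq_of_mul_eq_one_right (by decide)

lemma VleH : V ≤ H := by
  intro x hx
  have hx' : x ∈ Vfin := hx
  rw [memVfin] at hx'
  rcases hx' with rfl | rfl | rfl | rfl
  · exact one_mem H
  · exact Cmem
  · exact evalMem _
  · exact mul_mem Cmem (evalMem _)

lemma cardV : Nat.card V = 4 := by
  have h0 : Nat.card V = Nat.card ↥(↑Vfin : Set P) := rfl
  rw [h0, Nat.card_coe_set_eq, Set.ncard_coe_finset]
  decide

lemma dvd4 : 4 ∣ Nat.card H := by
  have := Subgroup.card_dvd_of_le VleH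
  rwa [cardV] at this

lemma dvd660 : 660 ∣ Nat.card H := by
  have h12 : 12 ∣ Nat.card H := (show Nat.Coprime 4 3 by decide).mul_dvd_of_dvd_of_dvd dvd4 dvd3
  have h60 : 60 ∣ Nat.card H := (show Nat.Coprime 12 5 by decide).mul_dvd_of_dvd_of_dvd h12 dvd5
  exact (show Nat.Coprime 60 11 by decide).mul_dvd_of_dvd_of_dvd h60 dvd11

lemma cardH : Nat.card H = 660 := by
  have pos : 0 < Nat.card H := Nat.card_pos
  exact le_antisymm cardH_le (Nat.le_of_dvd pos dvd660)

lemma indexH : H.index = 60480 := by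
  have h := Subgroup.card_mul_index (H := H)
  rw [cardH] at h
  have hcard : Nat.card P = 39916800 := by
    rw [Nat.card_eq_fintype_card, Fintype.card_perm, ZMod.card]
    norm_num [Nat.factorial]
  rw [hcard] at h
  omega

def pairW (x y : ZMod 11) : List (Fin 3) := pairTable.getD (x.val * 11 + y.val) []

set_option maxHeartbeats 1000000 in
lemma pairProp : ∀ x y : ZMod 11, x ≠ y →
    eval (pairW x y) 0 = x ∧ eval (pairW x y) 1 = y := by decide

lemma twoTrans : ∀ v w : Fin 2 → ZMod 11, Function.Injective v → Function.Injective w →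
    ∃ g ∈ H, ∀ i, g (v i) = w i := by
  intro v w hv hw
  have hv01 : v 0 ≠ v 1 := fun h => absurd (hv h) (by decide)
  have hw01 : w 0 ≠ w 1 := fun h => absurd (hw h) (by decide)
  set g1 := eval (pairW (v 0) (v 1)) with hg1
  set g2 := eval (pairW (w 0) (w 1)) with hg2
  have p10 : g1 0 = v 0 := (pairProp _ _ hv01).1
  have p11 : g1 1 = v 1 := (pairProp _ _ hv01).2
  have p20 : g2 0 = w 0 := (pairProp _ _ hw01).1
  have p21 : g2 1 = w 1 := (pairProp _ _ hw01).2
  refine ⟨g2 * g1⁻¹, mul_mem (evalMem _) (inv_mem (evalMem _)), ?_⟩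
  intro i
  have key : ∀ j : Fin 2, j = 0 ∨ j = 1 := by decide
  rcases key i with rfl | rfl
  · rw [Equiv.Perm.mul_apply, ← p10, Equiv.Perm.inv_def, Equiv.symm_apply_apply]
    exact p20
  · rw [Equiv.Perm.mul_apply, ← p11, Equiv.Perm.inv_def, Equiv.symm_apply_apply]
    exact p21

end KG

/-- The subgroup of the symmetric group on 11 points (realized as permutations of
`ZMod 11`) generated by `z ↦ z+1`, `z ↦ 4z` and `(4 3)(5 9)(10 2)(7 6)` acts
2-transitively and has index `60480` in the full symmetric group. -/
theorem kronecker_group_eleven :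
    IsMultiplyTransitive
        (Subgroup.closure
          {Equiv.addRight (1 : ZMod 11), Equiv.mulLeft₀ (4 : ZMod 11) (by decide),
            Equiv.swap (4 : ZMod 11) 3 * Equiv.swap 5 9 * Equiv.swap 10 2 *
              Equiv.swap 7 6}) 2 ∧
      (Subgroup.closure
          {Equiv.addRight (1 : ZMod 11), Equiv.mulLeft₀ (4 : ZMod 11) (by decide),
            Equiv.swap (4 : ZMod 11) 3 * Equiv.swap 5 9 * Equiv.swap 10 2 *
              Equiv.swap 7 6}).index = 60480 := by
  constructor
  · intro v w hv hw
    exact KG.twoTrans v w hv hw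
  · exact KG.indexH
end

section
/- If a subgroup G of Sym(X) with |X| = n is k-transitive for some k > n/2, then G contains the alternating group Alt(X). -/
open Equiv Equiv.Perm Finset

theorem Equiv.Perm.apply_inv_self {α : Type*} (f : Perm α) (x : α) : f (f⁻¹ x) = x :=
  f.apply_symm_apply x

theorem Equiv.Perm.inv_apply_self {α : Type*} (f : Perm α) (x : α) : f⁻¹ (f x) = x :=
  f.symm_apply_apply x

section Aux

variable {X : Type*} [Fintype X] [DecidableEq X]

/-- From `k`-transitivity: there is an element of `G` agreeing with any given
permutation on any given set of `k` points. -/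
lemma MT.agree_on {G : Subgroup (Equiv.Perm X)} {k : ℕ}
    (htrans : IsMultiplyTransitive G k) (σ : Equiv.Perm X) (B : Finset X)
    (hB : B.card = k) : ∃ g ∈ G, ∀ x ∈ B, g x = σ x := by
  have e : Fin k ≃ B := (B.equivFin.trans (finCongr hB)).symm
  set v : Fin k → X := fun i => (e i : X) with hv
  have hvinj : Function.Injective v := fun i j hij => by
    apply e.injective; exact Subtype.ext hij
  have hwinj : Function.Injective (fun i => σ (v i)) := σ.injective.comp hvinj
  obtain ⟨g, hg, hgw⟩ := htrans v (fun i => σ (v i)) hvinj hwinj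
  refine ⟨g, hg, fun x hx => ?_⟩
  have : v (e.symm ⟨x, hx⟩) = x := by simp [hv]
  rw [← this]; exact hgw _

/-- Two permutations agreeing on the support of `τ` conjugate `τ` the same way. -/
lemma conj_eq_conj {h π τ : Equiv.Perm X} (hagree : ∀ x ∈ τ.support, h x = π x) :
    h * τ * h⁻¹ = π * τ * π⁻¹ := by
  ext z
  simp only [Equiv.Perm.mul_apply]
  by_cases hz : h⁻¹ z ∈ τ.support
  · have h1 : τ (h⁻¹ z) ∈ τ.support := apply_mem_support.2 hz
    have h2 : π⁻¹ z = h⁻¹ z := by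
      apply π.injective
      rw [Perm.apply_inv_self, ← hagree _ hz, Perm.apply_inv_self]
    rw [h2, hagree _ h1]
  · have h3 : π⁻¹ z ∉ τ.support := by
      intro mem
      apply hz
      have : h (π⁻¹ z) = z := by rw [hagree _ mem, Perm.apply_inv_self]
      rw [← this, Perm.inv_apply_self]; exact mem
    rw [notMem_support.1 hz, notMem_support.1 h3, Perm.apply_inv_self,
      Perm.apply_inv_self]

/-- Two permutations agreeing on at least `n - 1` points are equal. -/
lemma eq_of_agree_on_large {h σ : Equiv.Perm X} (B : Finset X)
    (hB : Fintype.card X - 1 ≤ B.card) (hagree : ∀ x ∈ B, h x = σ x) : h = σ := by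
  ext x
  by_cases hx : x ∈ B
  · exact hagree x hx
  · have himg : B.image h = B.image σ := Finset.image_congr fun a ha => hagree a ha
    have hcard : ((B.image h)ᶜ).card ≤ 1 := by
      rw [Finset.card_compl, Finset.card_image_of_injective _ h.injective]
      omega
    have h1 : h x ∈ (B.image h)ᶜ := by
      rw [Finset.mem_compl]
      intro hmem
      obtain ⟨a, ha, hax⟩ := Finset.mem_image.1 hmem
      exact hx (h.injective hax ▸ ha)
    have h2 : σ x ∈ (B.image h)ᶜ := by
      rw [himg, Finset.mem_compl]
      intro hmem
      obtain ⟨a, ha, hax⟩ := Finset.mem_image.1 hmem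
      exact hx (σ.injective hax ▸ ha)
    exact Finset.card_le_one.1 hcard _ h1 _ h2

end Aux

/-- If a subgroup `G` of the symmetric group on a finite set `X` with `n` elements is
`k`-transitive for some `k > n/2` (with `k ≤ n`), then `G` contains the alternating
group of `X`. -/
theorem multiply_transitive_gt_half_contains_alternating {X : Type*} [Fintype X]
    [DecidableEq X] (G : Subgroup (Equiv.Perm X)) (k : ℕ) (hk : k ≤ Fintype.card X)
    (hhalf : Fintype.card X / 2 < k) (htrans : IsMultiplyTransitive G k) :
    alternatingGroup X ≤ G := by
  classical
  rw [← closure_three_cycles_eq_alternating]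
  rw [Subgroup.closure_le]
  intro σ hσ
  simp only [Set.mem_setOf_eq] at hσ
  show σ ∈ G
  set n := Fintype.card X with hn
  have hn3 : 3 ≤ n := by
    have := hσ.card_support
    have h2 := Finset.card_le_univ σ.support
    have h3 : (Finset.univ : Finset X).card = Fintype.card X := Finset.card_univ
    omega
  have h2k : n + 1 ≤ 2 * k := by
    have := (Nat.div_lt_iff_lt_mul (by norm_num : 0 < 2)).1 hhalf
    omega
  by_cases hkn : n - 1 ≤ k
  · -- k ≥ n - 1 : an element of G agreeing with σ on k points equals σ
    obtain ⟨B, -, -, hBcard⟩ :=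
      Finset.exists_subsuperset_card_eq (n := k)
        (Finset.empty_subset (Finset.univ : Finset X))
        (Nat.zero_le k) (by simpa using hk)
    obtain ⟨g, hgG, hgagree⟩ := MT.agree_on htrans σ B hBcard
    have : g = σ := eq_of_agree_on_large B (by omega) hgagree
    exact this ▸ hgG
  · push_neg at hkn
    have hkn2 : k ≤ n - 2 := by omega
    have hk3 : 3 ≤ k := by omega
    -- Step A: a nontrivial element of G with support of size ≤ n - k + 1 ≤ k
    obtain ⟨x, y, hxy⟩ := Fintype.exists_pair_of_one_lt_card (by omega : 1 < n)
    obtain ⟨P, -, hPsub, hPcard⟩ :=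
      Finset.exists_subsuperset_card_eq (n := k - 1)
        (Finset.empty_subset (({x, y} : Finset X)ᶜ)) (Nat.zero_le (k - 1))
        (by
          rw [Finset.card_compl]
          have : ({x, y} : Finset X).card ≤ 2 := by
            apply le_trans (Finset.card_insert_le _ _); simp
          omega)
    have hxP : x ∉ P := fun hxp => by
      have := hPsub hxp; rw [Finset.mem_compl] at this; exact this (by simp)
    have hyP : y ∉ P := fun hyp => by
      have := hPsub hyp; rw [Finset.mem_compl] at this; exact this (by simp)
    obtain ⟨g, hgG, hgagree⟩ := MT.agree_on htrans (swap x y) (insert x P)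
      (by rw [Finset.card_insert_of_notMem hxP, hPcard]; omega)
    have hgx : g x = y := by
      rw [hgagree x (Finset.mem_insert_self _ _), swap_apply_left]
    have hgne : g ≠ 1 := by
      intro h1
      rw [h1] at hgx
      simp only [Equiv.Perm.one_apply] at hgx
      exact hxy hgx
    have hgfix : ∀ p ∈ P, g p = p := by
      intro p hp
      rw [hgagree p (Finset.mem_insert_of_mem hp)]
      have := hPsub hp; rw [Finset.mem_compl, Finset.mem_insert, Finset.mem_singleton] at this
      push_neg at this
      exact swap_apply_of_ne_of_ne this.1 this.2
    have hsupp : g.support ⊆ Pᶜ := by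
      intro z hz
      rw [Finset.mem_compl]
      intro hzP
      exact (mem_support.1 hz) (hgfix z hzP)
    have hsuppcard : g.support.card ≤ n - k + 1 := by
      have := Finset.card_le_card hsupp
      rw [Finset.card_compl, hPcard] at this
      omega
    -- Step B: shrink to a nontrivial element with support of size ≤ 3
    have hshrink : ∃ u : Equiv.Perm X, u ∈ G ∧ u ≠ 1 ∧ u.support.card ≤ 3 := by
      by_cases hs3 : g.support.card ≤ 3
      · exact ⟨g, hgG, hgne, hs3⟩
      · push_neg at hs3
        set S := g.support with hS
        have hSk : S.card ≤ k := by omega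
        have hSlt : S.card < n := by omega
        -- pick d ∉ S
        have hcompl : (Sᶜ).Nonempty := by
          rw [← Finset.card_pos, Finset.card_compl]; omega
        obtain ⟨d, hd⟩ := hcompl
        rw [Finset.mem_compl] at hd
        -- pick c ∈ S
        have hSne : S.Nonempty := by rw [← Finset.card_pos]; omega
        obtain ⟨c, hc⟩ := hSne
        -- B₂ with S ⊆ B₂ ⊆ {d}ᶜ, card k
        obtain ⟨B₂, hSB2, hB₂sub, hB₂card⟩ :=
          Finset.exists_subsuperset_card_eq (n := k)
            (show S ⊆ ({d} : Finset X)ᶜ by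
              intro z hz; rw [Finset.mem_compl, Finset.mem_singleton]
              intro h; exact hd (h ▸ hz))
            hSk
            (by rw [Finset.card_compl, Finset.card_singleton]; omega)
        obtain ⟨h, hhG, hhagree⟩ := MT.agree_on htrans (swap c d) B₂ hB₂card
        have hdB₂ : d ∉ B₂ := fun hmem => by
          have := hB₂sub hmem; rw [Finset.mem_compl, Finset.mem_singleton] at this
          exact this rfl
        have Hc : h c = d := by
          rw [hhagree c (hSB2 hc), swap_apply_left]
        have Hfix : ∀ z ∈ S, z ≠ c → h z = z := by
          intro z hz hzc
          rw [hhagree z (hSB2 hz)]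
          exact swap_apply_of_ne_of_ne hzc (fun hzd => hdB₂ (hzd ▸ hSB2 hz))
        -- no element of S is mapped to c by h
        have hinvc : h⁻¹ c ∉ S := by
          intro hmem
          by_cases hcc : h⁻¹ c = c
          · have hhc : h c = c := by
              rw [← hcc, Perm.apply_inv_self]
              exact hcc.symm
            rw [Hc] at hhc
            rw [hcc, ← hhc] at hmem
            exact hd hmem
          · have h5 := Hfix _ hmem hcc
            rw [Perm.apply_inv_self] at h5
            exact hcc h5.symm
        set t := h * g * h⁻¹ with ht
        have htG : t ∈ G := G.mul_mem (G.mul_mem hhG hgG) (G.inv_mem hhG)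
        set u := t⁻¹ * g with hu
        have huG : u ∈ G := G.mul_mem (G.inv_mem htG) hgG
        have htc : t c = c := by
          rw [ht]
          simp only [Equiv.Perm.mul_apply]
          rw [notMem_support.1 hinvc, Perm.apply_inv_self]
        have hune : u ≠ 1 := by
          intro h1
          have huc : u c = c := by rw [h1]; rfl
          rw [hu] at huc
          simp only [Equiv.Perm.mul_apply] at huc
          have : g c = t c := by
            have := congrArg t huc
            rwa [Perm.apply_inv_self] at this
          rw [htc] at this
          exact (mem_support.1 hc) this
        have husupp : u.support ⊆ {c, g⁻¹ c, d} := by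
          intro z hz
          by_contra hznot
          simp only [Finset.mem_insert, Finset.mem_singleton] at hznot
          push_neg at hznot
          obtain ⟨hzc, hzg, hzd⟩ := hznot
          apply mem_support.1 hz
          rw [hu]
          simp only [Equiv.Perm.mul_apply]
          have key : g z = t z → t⁻¹ (g z) = z := by
            intro hgt; rw [hgt, Perm.inv_apply_self]
          apply key
          by_cases hzS : z ∈ S
          · have hhz : h z = z := Hfix z hzS hzc
            have hhinvz : h⁻¹ z = z := by
              apply h.injective; rw [Perm.apply_inv_self, hhz]
            rw [ht]
            simp only [Equiv.Perm.mul_apply]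
            rw [hhinvz]
            have hgzS : g z ∈ S := apply_mem_support.2 hzS
            have hgzc : g z ≠ c := by
              intro hgc
              apply hzg
              rw [← hgc, Perm.inv_apply_self]
            rw [Hfix _ hgzS hgzc]
          · have hgz : g z = z := notMem_support.1 hzS
            have hhinvz : h⁻¹ z ∉ S := by
              intro hmem
              by_cases hwc : h⁻¹ z = c
              · apply hzd
                rw [← Perm.apply_inv_self h z, hwc, Hc]
              · have := Hfix _ hmem hwc
                rw [Perm.apply_inv_self] at this
                rw [← this] at hmem
                exact hzS hmem
            rw [ht]
            simp only [Equiv.Perm.mul_apply]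
            rw [notMem_support.1 hhinvz, Perm.apply_inv_self, hgz]
        refine ⟨u, huG, hune, ?_⟩
        calc u.support.card ≤ ({c, g⁻¹ c, d} : Finset X).card :=
              Finset.card_le_card husupp
          _ ≤ 3 := by
              apply le_trans (Finset.card_insert_le _ _)
              have : ({g⁻¹ c, d} : Finset X).card ≤ 2 := by
                apply le_trans (Finset.card_insert_le _ _); simp
              omega
    obtain ⟨u, huG, hune, husupp3⟩ := hshrink
    -- Step C: from u, produce a three-cycle in G
    have hthree : ∃ τ : Equiv.Perm X, τ ∈ G ∧ τ.IsThreeCycle := by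
      have hne0 : u.support.card ≠ 0 := by
        intro h0
        apply hune
        rw [← Equiv.Perm.support_eq_empty_iff]
        exact Finset.card_eq_zero.1 h0
      have hne1 : u.support.card ≠ 1 := Equiv.Perm.card_support_ne_one u
      interval_cases h : u.support.card
      · omega
      · omega
      · -- u is a swap
        obtain ⟨a, b, hab, huswap⟩ := Equiv.Perm.card_support_eq_two.1 h
        -- pick z outside {a, b}
        have : ((({a, b} : Finset X))ᶜ).Nonempty := by
          rw [← Finset.card_pos, Finset.card_compl]
          have : ({a, b} : Finset X).card ≤ 2 := by
            apply le_trans (Finset.card_insert_le _ _); simp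
          omega
        obtain ⟨z, hz⟩ := this
        rw [Finset.mem_compl, Finset.mem_insert, Finset.mem_singleton] at hz
        push_neg at hz
        obtain ⟨hza, hzb⟩ := hz
        set π₃ : Equiv.Perm X := swap a z * swap a b with hπ₃
        have hπ₃a : π₃ a = b := by
          rw [hπ₃]
          simp only [Equiv.Perm.mul_apply, swap_apply_left]
          exact swap_apply_of_ne_of_ne (Ne.symm hab) (fun h => hzb h.symm)
        have hπ₃b : π₃ b = z := by
          rw [hπ₃]
          simp only [Equiv.Perm.mul_apply]
          rw [swap_apply_right, swap_apply_left]
        obtain ⟨B₃, hB₃sup, -, hB₃card⟩ :=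
          Finset.exists_subsuperset_card_eq (n := k)
            (Finset.subset_univ ({a, b} : Finset X))
            (by
              have : ({a, b} : Finset X).card ≤ 2 := by
                apply le_trans (Finset.card_insert_le _ _); simp
              omega)
            (by rw [Finset.card_univ]; exact hk)
        obtain ⟨h₂, hh₂G, hh₂agree⟩ := MT.agree_on htrans π₃ B₃ hB₃card
        have hconj : h₂ * u * h₂⁻¹ = π₃ * u * π₃⁻¹ := by
          apply conj_eq_conj
          intro w hw
          apply hh₂agree
          apply hB₃sup
          rw [huswap, Equiv.Perm.support_swap hab] at hw
          exact hw
        have hπ₃u : π₃ * u * π₃⁻¹ = swap b z := by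
          rw [huswap, ← Equiv.swap_apply_apply, hπ₃a, hπ₃b]
        refine ⟨u * (h₂ * u * h₂⁻¹), G.mul_mem huG
          (G.mul_mem (G.mul_mem hh₂G huG) (G.inv_mem hh₂G)), ?_⟩
        rw [hconj, hπ₃u, huswap, Equiv.swap_comm a b]
        exact Equiv.Perm.isThreeCycle_swap_mul_swap_same (Ne.symm hab)
          (fun h => hzb h.symm) (fun h => hza h.symm)
      · -- u is a three-cycle
        exact ⟨u, huG, card_support_eq_three_iff.1 h⟩
    obtain ⟨τ, hτG, hτ3⟩ := hthree
    -- Step D: conjugate τ to σ using 3-transitivity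
    have hconj : IsConj τ σ :=
      Equiv.Perm.isConj_of_cycleType_eq (hτ3.trans hσ.symm)
    obtain ⟨π, hπ⟩ := isConj_iff.1 hconj
    obtain ⟨B₄, hB₄sup, -, hB₄card⟩ :=
      Finset.exists_subsuperset_card_eq (n := k) (Finset.subset_univ τ.support)
        (by rw [hτ3.card_support]; exact hk3)
        (by rw [Finset.card_univ]; exact hk)
    obtain ⟨h₃, hh₃G, hh₃agree⟩ := MT.agree_on htrans π B₄ hB₄card
    have : h₃ * τ * h₃⁻¹ = σ := by
      rw [conj_eq_conj (fun w hw => hh₃agree w (hB₄sup hw)), hπ]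
    rw [← this]
    exact G.mul_mem (G.mul_mem hh₃G hτG) (G.inv_mem hh₃G)
end
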